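/- arXiv:1401.5892 — 2 statements merged into one kernel-verified Lean document; each statement's English description precedes it below -/
import Mathlib

section
/- If μ ≪ π with ψ = dμ/dπ and ψ log ψ ∈ L^1(π), then sup_{f ∈ C(X)} (∫ f dμ − log ∫ e^f dπ) ≤ ∫ ψ log ψ dπ. -/
open MeasureTheory

/-- If `μ ≪ π` with `ψ = dμ/dπ` and `ψ log ψ ∈ L¹(π)`, then
`sup_{f ∈ C(X)} (∫ f dμ - log ∫ e^f dπ) ≤ ∫ ψ log ψ dπ`. -/
theorem stmt13 {X : Type*} [MetricSpace X] [CompactSpace X]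
    [MeasurableSpace X] [BorelSpace X]
    (μ π : Measure X) [IsProbabilityMeasure μ] [IsProbabilityMeasure π]
    (ψ : X → ℝ) (hψ_meas : Measurable ψ) (hψ_nonneg : ∀ x, 0 ≤ ψ x)
    (hμ : μ = π.withDensity (fun x => ENNReal.ofReal (ψ x)))
    (hent : Integrable (fun x => ψ x * Real.log (ψ x)) π) :
    ∀ f : C(X, ℝ),
      ∫ x, f x ∂μ - Real.log (∫ x, Real.exp (f x) ∂π) ≤
        ∫ x, ψ x * Real.log (ψ x) ∂π := by
  intro f
  have hne : Nonempty X := by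
    by_contra h
    haveI := not_nonempty_iff.mp h
    have h1 := measure_univ (μ := μ)
    simp [Set.univ_eq_empty_iff.mpr ‹IsEmpty X›] at h1
  have hCS : ∀ g : X → ℝ, HasCompactSupport g := fun g =>
    IsCompact.of_isClosed_subset isCompact_univ (isClosed_tsupport _) (Set.subset_univ _)
  -- basic integrability facts
  have hexp_cont : Continuous fun x => Real.exp (f x) := Real.continuous_exp.comp f.continuous
  have hint_exp : Integrable (fun x => Real.exp (f x)) π := hexp_cont.integrable_of_hasCompactSupport (hCS _)
  set Z := ∫ x, Real.exp (f x) ∂π with hZ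
  have hZ_pos : 0 < Z := by
    rw [hZ, integral_pos_iff_support_of_nonneg (fun x => (Real.exp_pos _).le) hint_exp]
    have : Function.support (fun x => Real.exp (f x)) = Set.univ := by
      ext x; simp [Real.exp_ne_zero]
    rw [this]
    simp
  set c := Real.log Z with hc
  -- lintegral of ψ is 1
  have hμuniv : ∫⁻ x, ENNReal.ofReal (ψ x) ∂π = 1 := by
    have h := measure_univ (μ := μ)
    rw [hμ, withDensity_apply _ MeasurableSet.univ] at h
    simpa using h
  -- ψ is integrable with integral 1
  have hψ_int : Integrable ψ π := by
    refine ⟨hψ_meas.aestronglyMeasurable, ?_⟩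
    rw [hasFiniteIntegral_iff_ofReal (Filter.Eventually.of_forall hψ_nonneg), hμuniv]
    exact ENNReal.one_lt_top
  have hψ_integral : ∫ x, ψ x ∂π = 1 := by
    rw [integral_eq_lintegral_of_nonneg_ae (Filter.Eventually.of_forall hψ_nonneg)
      hψ_meas.aestronglyMeasurable, hμuniv]
    simp
  -- ψ * (f - c) is integrable
  have hfc_cont : Continuous fun x => f x - c := f.continuous.sub continuous_const
  have hbdd : ∃ C, ∀ x, ‖f x - c‖ ≤ C := by
    obtain ⟨D, hD⟩ := (IsCompact.exists_bound_of_continuousOn isCompact_univ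
      hfc_cont.continuousOn)
    exact ⟨D, fun x => hD x (Set.mem_univ x)⟩
  have hψfc_int : Integrable (fun x => ψ x * (f x - c)) π := by
    have := Integrable.bdd_mul (f := fun x => f x - c) (g := ψ) hψ_int
      hfc_cont.aestronglyMeasurable (Filter.Eventually.of_forall hbdd.choose_spec)
    simpa [mul_comm] using this
  have hexpc_int : Integrable (fun x => Real.exp (f x - c)) π :=
    (Real.continuous_exp.comp hfc_cont).integrable_of_hasCompactSupport (hCS _)
  -- key pointwise inequality
  have key : ∀ x, ψ x * (f x - c) - ψ x * Real.log (ψ x)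
      ≤ Real.exp (f x - c) - ψ x := by
    intro x
    rcases eq_or_lt_of_le (hψ_nonneg x) with h0 | hpos
    · rw [← h0]
      simp [(Real.exp_pos (f x - c)).le]
    · have h1 : Real.log (Real.exp (f x - c) / ψ x)
          ≤ Real.exp (f x - c) / ψ x - 1 :=
        Real.log_le_sub_one_of_pos (by positivity)
      rw [Real.log_div (Real.exp_ne_zero _) (ne_of_gt hpos), Real.log_exp] at h1
      have h2 : ψ x * (Real.exp (f x - c) / ψ x) = Real.exp (f x - c) :=
        mul_div_cancel₀ _ (ne_of_gt hpos)
      nlinarith [mul_le_mul_of_nonneg_left h1 hpos.le]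
  -- integrate the pointwise inequality
  have hineq : ∫ x, (ψ x * (f x - c) - ψ x * Real.log (ψ x)) ∂π
      ≤ ∫ x, (Real.exp (f x - c) - ψ x) ∂π :=
    integral_mono (hψfc_int.sub hent) (hexpc_int.sub hψ_int) key
  have hrhs : ∫ x, (Real.exp (f x - c) - ψ x) ∂π = 0 := by
    rw [integral_sub hexpc_int hψ_int, hψ_integral]
    have : ∫ x, Real.exp (f x - c) ∂π = Z * Real.exp (-c) := by
      simp_rw [Real.exp_sub, div_eq_mul_inv, ← Real.exp_neg]
      rw [integral_mul_const]
    rw [this, hc, Real.exp_neg, Real.exp_log hZ_pos]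
    field_simp
    simp
  rw [integral_sub hψfc_int hent, hrhs, sub_nonpos] at hineq
  -- rewrite ∫ f dμ - c as ∫ ψ (f - c) dπ
  have hdens : ∫ x, (f x - c) ∂μ = ∫ x, ψ x * (f x - c) ∂π := by
    rw [hμ]
    have heq : (fun x => ENNReal.ofReal (ψ x)) = fun x => ((ψ x).toNNReal : ENNReal) := rfl
    rw [heq, integral_withDensity_eq_integral_smul
      hψ_meas.real_toNNReal]
    refine integral_congr_ae (Filter.Eventually.of_forall fun x => ?_)
    simp [NNReal.smul_def, Real.coe_toNNReal _ (hψ_nonneg x)]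
  have hfint : Integrable (fun x => f x) μ := f.continuous.integrable_of_hasCompactSupport (hCS _)
  have hsplit : ∫ x, (f x - c) ∂μ = ∫ x, f x ∂μ - c := by
    rw [integral_sub hfint (integrable_const c), integral_const]
    simp
  calc ∫ x, f x ∂μ - c = ∫ x, ψ x * (f x - c) ∂π := by rw [← hsplit, hdens]
    _ ≤ ∫ x, ψ x * Real.log (ψ x) ∂π := hineq
end

section
/- If H(μ,π) = sup_{f ∈ C(X)} (∫ f dμ − log ∫ e^f dπ) is finite, then μ ≪ π, ψ = dμ/dπ satisfies ψ log ψ ∈ L^1(π), and H(μ,π) = ∫ ψ log ψ dπ. -/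
open MeasureTheory

section Aux
open Real Filter
open scoped ENNReal NNReal Topology BoundedContinuousFunction

lemma aux_sub_one_le_mul_log {t : ℝ} (ht : 0 ≤ t) : t - 1 ≤ t * Real.log t := by
  rcases eq_or_lt_of_le ht with h | h
  · simp [← h]
  · have h1 : Real.log t⁻¹ ≤ t⁻¹ - 1 := Real.log_le_sub_one_of_pos (by positivity)
    rw [Real.log_inv] at h1
    have := mul_le_mul_of_nonneg_left (by linarith : 1 - t⁻¹ ≤ Real.log t) ht
    calc t - 1 = t * (1 - t⁻¹) := by field_simp
    _ ≤ t * Real.log t := this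

/-- clamped log -/
noncomputable def clog (n : ℕ) (t : ℝ) : ℝ :=
  Real.log (max (min t (Real.exp n)) (Real.exp (-(n:ℝ))))

lemma clog_continuous (n : ℕ) : Continuous (clog n) := by
  apply Continuous.log
  · exact (continuous_id.min continuous_const).max continuous_const
  · intro x
    have : Real.exp (-(n:ℝ)) ≤ max (min x (Real.exp n)) (Real.exp (-(n:ℝ))) := le_max_right _ _
    positivity

lemma clog_abs_le (n : ℕ) (t : ℝ) : |clog n t| ≤ n := by
  have hpos : (0:ℝ) < max (min t (Real.exp n)) (Real.exp (-(n:ℝ))) :=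
    lt_of_lt_of_le (Real.exp_pos _) (le_max_right _ _)
  rw [abs_le, clog]
  constructor
  · have h := Real.log_le_log (Real.exp_pos _) (le_max_right (min t (Real.exp n)) (Real.exp (-(n:ℝ))))
    rwa [Real.log_exp] at h
  · have hle : max (min t (Real.exp n)) (Real.exp (-(n:ℝ))) ≤ Real.exp n := by
      apply max_le (min_le_right _ _)
      exact Real.exp_le_exp.mpr (by simp)
    have h := Real.log_le_log hpos hle
    rwa [Real.log_exp] at h

lemma exp_clog (n : ℕ) (t : ℝ) :
    Real.exp (clog n t) = max (min t (Real.exp n)) (Real.exp (-(n:ℝ))) := by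
  rw [clog, Real.exp_log]
  have : Real.exp (-(n:ℝ)) ≤ max (min t (Real.exp n)) (Real.exp (-(n:ℝ))) := le_max_right _ _
  positivity


lemma clog_le_log {t : ℝ} (ht : 1 ≤ t) (n : ℕ) : clog n t ≤ Real.log t := by
  rw [clog]
  apply Real.log_le_log (lt_of_lt_of_le (Real.exp_pos _) (le_max_right _ _))
  apply max_le (le_trans (min_le_left _ _) le_rfl)
  calc Real.exp (-(n:ℝ)) ≤ Real.exp 0 := Real.exp_le_exp.mpr (by simp)
    _ = 1 := Real.exp_zero
    _ ≤ t := ht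

lemma clog_nonneg {t : ℝ} (ht : 1 ≤ t) (n : ℕ) : 0 ≤ clog n t := by
  rw [clog]
  apply Real.log_nonneg
  apply le_max_of_le_left
  exact le_min ht (by calc (1:ℝ) = Real.exp 0 := Real.exp_zero.symm
    _ ≤ Real.exp n := Real.exp_le_exp.mpr (by positivity))

lemma mul_clog_neg_one_le {t : ℝ} (ht : 0 ≤ t) (n : ℕ) : -1 ≤ t * clog n t := by
  rcases le_or_gt 1 t with h | h
  · have := mul_nonneg (le_trans ht (le_of_eq rfl)) (clog_nonneg h n)
    nlinarith [mul_nonneg ht (clog_nonneg h n)]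
  · -- t < 1
    set s := max (min t (Real.exp n)) (Real.exp (-(n:ℝ))) with hs
    have hs_pos : 0 < s := lt_of_lt_of_le (Real.exp_pos _) (le_max_right _ _)
    have hts : t ≤ s := by
      rw [hs]
      apply le_max_of_le_left
      exact le_min le_rfl (le_trans h.le (by
        calc (1:ℝ) = Real.exp 0 := Real.exp_zero.symm
          _ ≤ Real.exp n := Real.exp_le_exp.mpr (by positivity)))
    have hs1 : s ≤ 1 := by
      rw [hs]
      apply max_le (le_trans (min_le_left _ _) h.le)
      calc Real.exp (-(n:ℝ)) ≤ Real.exp 0 := Real.exp_le_exp.mpr (by simp)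
        _ = 1 := Real.exp_zero
    have hlog : Real.log s ≤ 0 := Real.log_nonpos hs_pos.le hs1
    have h1 : s * Real.log s ≤ t * Real.log s :=
      mul_le_mul_of_nonpos_right hts hlog
    have h2 : s - 1 ≤ s * Real.log s := aux_sub_one_le_mul_log hs_pos.le
    have : clog n t = Real.log s := rfl
    rw [this]
    nlinarith
lemma abs_mul_clog_le {t : ℝ} (ht : 0 ≤ t) (n : ℕ) :
    |t * clog n t| ≤ |t * Real.log t| + 1 := by
  rcases le_or_gt 1 t with h | h
  · have h0 : 0 ≤ t * clog n t := mul_nonneg ht (clog_nonneg h n)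
    have h1 : t * clog n t ≤ t * Real.log t := by
      apply mul_le_mul_of_nonneg_left (clog_le_log h n) ht
    rw [abs_of_nonneg h0]
    calc t * clog n t ≤ t * Real.log t := h1
      _ ≤ |t * Real.log t| := le_abs_self _
      _ ≤ |t * Real.log t| + 1 := by linarith
  · have hup : t * clog n t ≤ 0 := by
      apply mul_nonpos_of_nonneg_of_nonpos ht
      rw [clog]
      apply Real.log_nonpos (le_of_lt (lt_of_lt_of_le (Real.exp_pos _) (le_max_right _ _)))
      apply max_le (le_trans (min_le_left _ _) h.le)
      calc Real.exp (-(n:ℝ)) ≤ Real.exp 0 := Real.exp_le_exp.mpr (by simp)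
        _ = 1 := Real.exp_zero
    have hlo := mul_clog_neg_one_le ht n
    rw [abs_of_nonpos hup]
    have : 0 ≤ |t * Real.log t| := abs_nonneg _
    linarith

lemma tendsto_mul_clog {t : ℝ} (ht : 0 ≤ t) :
    Filter.Tendsto (fun n : ℕ => t * clog n t) atTop (nhds (t * Real.log t)) := by
  rcases eq_or_lt_of_le ht with h | h
  · simp only [← h, zero_mul]
    exact tendsto_const_nhds
  · apply Filter.Tendsto.congr' _ tendsto_const_nhds
    obtain ⟨N, hN⟩ := exists_nat_gt |Real.log t|
    rw [Filter.EventuallyEq, eventually_atTop]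
    refine ⟨N, fun n hn => ?_⟩
    have habs : |Real.log t| ≤ (n:ℝ) := le_trans hN.le (Nat.cast_le.mpr hn)
    have h1 : t ≤ Real.exp n := by
      calc t = Real.exp (Real.log t) := (Real.exp_log h).symm
        _ ≤ Real.exp n := Real.exp_le_exp.mpr (le_trans (le_abs_self _) habs)
    have h2 : Real.exp (-(n:ℝ)) ≤ t := by
      calc Real.exp (-(n:ℝ)) ≤ Real.exp (Real.log t) := by
            apply Real.exp_le_exp.mpr
            rw [neg_le]
            exact le_trans (neg_le_abs _) habs
        _ = t := Real.exp_log h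
    rw [clog, min_eq_left h1, max_eq_left h2]

section AC
variable {X : Type*} [MetricSpace X] [CompactSpace X] [MeasurableSpace X] [BorelSpace X]
  (μ P : Measure X) [IsProbabilityMeasure μ] [IsProbabilityMeasure P] (H : ℝ)

lemma cont_integrable (f : C(X, ℝ)) (ν : Measure X) [IsFiniteMeasure ν] :
    Integrable (fun x => f x) ν :=
  (BoundedContinuousFunction.mkOfCompact f).integrable ν

lemma aux_ac
    (hub : ∀ f : C(X, ℝ), ∫ x, f x ∂μ - Real.log (∫ x, Real.exp (f x) ∂P) ≤ H) :
    μ ≪ P := by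
  rw [Measure.AbsolutelyContinuous]
  intro s hPs
  by_contra hμs
  -- replace s by a measurable version with the same P-measure
  set t := toMeasurable P s with ht
  have hts : s ⊆ t := subset_toMeasurable P s
  have htm : MeasurableSet t := measurableSet_toMeasurable P s
  have hPt : P t = 0 := by rw [ht, measure_toMeasurable]; exact hPs
  have hμt : μ t ≠ 0 := fun h => hμs (measure_mono_null hts h)
  -- a compact subset of t with positive μ-measure
  obtain ⟨K, hKt, hKc, hKμ⟩ := htm.exists_isCompact_lt_add (μ := μ)
    (measure_ne_top μ t) (by simp [hμt, ENNReal.div_eq_zero_iff] : μ t / 2 ≠ 0)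
  have hKpos : 0 < (μ K).toReal := by
    rw [ENNReal.toReal_pos_iff]
    constructor
    · by_contra h
      push_neg at h
      simp only [nonpos_iff_eq_zero] at h
      rw [h, zero_add] at hKμ
      exact absurd hKμ (not_lt.mpr (ENNReal.half_le_self))
    · exact lt_of_le_of_lt (measure_mono (Set.subset_univ K)) (by simp [measure_lt_top])
  set c := (μ K).toReal with hc
  -- choose n large
  obtain ⟨n, hn⟩ := exists_nat_gt ((H + Real.log 2) / c)
  have hnc : H + Real.log 2 < n * c := by
    rw [div_lt_iff₀ hKpos] at hn; linarith
  -- an open set U ⊇ t with small P-measure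
  obtain ⟨U, hUt, hUo, hPU⟩ := Set.exists_isOpen_lt_of_lt (μ := P) t
    (ENNReal.ofReal (Real.exp (-(n:ℝ)))) (by
      rw [hPt]; exact ENNReal.ofReal_pos.mpr (Real.exp_pos _))
  -- Urysohn function
  obtain ⟨g, hg0, hg1, hg01⟩ := exists_continuous_zero_one_of_isClosed
    (hUo.isClosed_compl) hKc.isClosed
    (Set.disjoint_compl_left_iff_subset.mpr (hKt.trans hUt))
  set fc : C(X, ℝ) := (n:ℝ) • g with hfc
  have hgnn : ∀ x, 0 ≤ g x := fun x => (hg01 x).1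
  have hgle : ∀ x, g x ≤ 1 := fun x => (hg01 x).2
  -- lower bound on ∫ fc dμ
  have h1 : (n:ℝ) * c ≤ ∫ x, fc x ∂μ := by
    have hint : Integrable (fun x => fc x) μ := cont_integrable fc μ
    have hnn : 0 ≤ᵐ[μ] fun x => fc x := Filter.Eventually.of_forall fun x => by
      simp only [hfc, ContinuousMap.smul_apply, smul_eq_mul]
      exact mul_nonneg (Nat.cast_nonneg n) (hgnn x)
    calc (n:ℝ) * c = ∫ x in K, (n:ℝ) ∂μ := by
          rw [setIntegral_const, smul_eq_mul, hc, mul_comm]; rfl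
      _ = ∫ x in K, fc x ∂μ := by
          apply setIntegral_congr_fun hKc.measurableSet
          intro x hx
          simp [hfc, hg1 hx]
      _ ≤ ∫ x, fc x ∂μ := setIntegral_le_integral hint hnn
  -- upper bound on ∫ exp (fc x) dP
  have hPUr : (P U).toReal ≤ Real.exp (-(n:ℝ)) :=
    ENNReal.toReal_le_of_le_ofReal (Real.exp_pos _).le hPU.le
  have h2 : ∫ x, Real.exp (fc x) ∂P ≤ 2 := by
    have hint1 : Integrable (fun x => Real.exp (fc x)) P := by
      have : Continuous fun x => Real.exp (fc x) := Real.continuous_exp.comp fc.continuous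
      exact cont_integrable ⟨_, this⟩ P
    have hint2 : Integrable
        (fun x => Set.indicator U (fun _ => Real.exp n) x + 1) P :=
      ((integrable_const (Real.exp n)).indicator hUo.measurableSet).add (integrable_const 1)
    have hmono : ∀ x, Real.exp (fc x) ≤ Set.indicator U (fun _ => Real.exp n) x + 1 := by
      intro x
      by_cases hx : x ∈ U
      · rw [Set.indicator_of_mem hx]
        have : fc x ≤ n := by
          simp only [hfc, ContinuousMap.smul_apply, smul_eq_mul]
          calc (n:ℝ) * g x ≤ (n:ℝ) * 1 := by
                apply mul_le_mul_of_nonneg_left (hgle x) (by positivity)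
          _ = n := mul_one _
        have := Real.exp_le_exp.mpr this
        linarith
      · rw [Set.indicator_of_notMem hx]
        have : fc x = 0 := by simp [hfc, hg0 hx]
        simp [this]
    calc ∫ x, Real.exp (fc x) ∂P
        ≤ ∫ x, (Set.indicator U (fun _ => Real.exp n) x + 1) ∂P :=
          integral_mono hint1 hint2 hmono
      _ = (P U).toReal • Real.exp n + 1 := by
          rw [integral_add ((integrable_const (Real.exp n)).indicator hUo.measurableSet)
            (integrable_const 1), integral_indicator_const _ hUo.measurableSet]
          simp; rfl
      _ ≤ 2 := by
          have : (P U).toReal • Real.exp n ≤ 1 := by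
            rw [smul_eq_mul]
            calc (P U).toReal * Real.exp n ≤ Real.exp (-(n:ℝ)) * Real.exp n :=
                  mul_le_mul_of_nonneg_right hPUr (Real.exp_pos _).le
              _ = 1 := by rw [← Real.exp_add]; simp
          linarith
  have hexp_pos : 0 < ∫ x, Real.exp (fc x) ∂P := by
    apply integral_exp_pos
    have : Continuous fun x => Real.exp (fc x) := Real.continuous_exp.comp fc.continuous
    exact cont_integrable ⟨_, this⟩ P
  have h3 : Real.log (∫ x, Real.exp (fc x) ∂P) ≤ Real.log 2 := Real.log_le_log hexp_pos h2
  have := hub fc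
  linarith

lemma aux_test
    (hub : ∀ f : C(X, ℝ), ∫ x, f x ∂μ - Real.log (∫ x, Real.exp (f x) ∂P) ≤ H)
    (hac : μ ≪ P) (n : ℕ) :
    ∫ x, clog n ((μ.rnDeriv P x).toReal) ∂μ
      - Real.log (∫ x, Real.exp (clog n ((μ.rnDeriv P x).toReal)) ∂P) ≤ H := by
  set ψ : X → ℝ := fun x => (μ.rnDeriv P x).toReal with hψ
  have hψm : Measurable ψ := (Measure.measurable_rnDeriv μ P).ennreal_toReal
  have hψi : Integrable ψ P := Measure.integrable_toReal_rnDeriv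
  -- continuous approximations of ψ in L¹(P)
  have happrox : ∀ k : ℕ, ∃ u : X →ᵇ ℝ,
      eLpNorm (ψ - (u : X → ℝ)) 1 P ≤ ((k : ℝ≥0∞) + 1)⁻¹ := by
    intro k
    obtain ⟨u, hu, -⟩ := (memLp_one_iff_integrable.mpr hψi).exists_boundedContinuous_eLpNorm_sub_le
      (ENNReal.one_ne_top) (ε := ((k : ℝ≥0∞) + 1)⁻¹) (by simp)
    exact ⟨u, hu⟩
  choose u hu using happrox
  -- a.e. convergent subsequence
  have htim : TendstoInMeasure P (fun k => (u k : X → ℝ)) atTop ψ := by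
    apply tendstoInMeasure_of_tendsto_eLpNorm one_ne_zero
      (fun k => (u k).continuous.aestronglyMeasurable) hψm.aestronglyMeasurable
    have h0 : Tendsto (fun k : ℕ => ((k : ℝ≥0∞) + 1)⁻¹) atTop (nhds 0) := by
      have := ENNReal.tendsto_inv_nat_nhds_zero
      have h1 : Tendsto (fun k : ℕ => (k : ℕ) + 1) atTop atTop := tendsto_add_atTop_nat 1
      have := this.comp h1
      simpa [Function.comp_def] using this
    apply tendsto_of_tendsto_of_tendsto_of_le_of_le tendsto_const_nhds h0
      (fun k => zero_le)
    intro k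
    show eLpNorm ((u k : X → ℝ) - ψ) 1 P ≤ _
    have h1 : (u k : X → ℝ) - ψ = -(ψ - (u k : X → ℝ)) := by funext x; simp [sub_eq_neg_add]
    rw [h1, eLpNorm_neg]
    exact hu k
  obtain ⟨ns, -, hae⟩ := htim.exists_seq_tendsto_ae
  -- continuous test functions
  set F : ℕ → C(X, ℝ) := fun j =>
    ⟨fun x => clog n (u (ns j) x), (clog_continuous n).comp (u (ns j)).continuous⟩ with hF
  have hFb : ∀ j x, |F j x| ≤ (n : ℝ) := fun j x => clog_abs_le n _
  -- a.e. convergence of the test functions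
  have haeF : ∀ᵐ x ∂P, Tendsto (fun j => F j x) atTop (nhds (clog n (ψ x))) := by
    filter_upwards [hae] with x hx
    exact (((clog_continuous n).tendsto _).comp hx)
  -- convergence of ∫ F j dμ
  have hconv1 : Tendsto (fun j => ∫ x, F j x ∂μ) atTop (nhds (∫ x, clog n (ψ x) ∂μ)) := by
    apply tendsto_integral_of_dominated_convergence (fun _ => (n : ℝ))
      (fun j => (F j).continuous.aestronglyMeasurable) (integrable_const _)
      (fun j => Filter.Eventually.of_forall fun x => by
        rw [Real.norm_eq_abs]; exact hFb j x)
    exact haeF.filter_mono hac.ae_le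
  -- convergence of ∫ exp (F j x) dP
  have hconv2 : Tendsto (fun j => ∫ x, Real.exp (F j x) ∂P) atTop
      (nhds (∫ x, Real.exp (clog n (ψ x)) ∂P)) := by
    apply tendsto_integral_of_dominated_convergence (fun _ => Real.exp n)
      (fun j => (Real.continuous_exp.comp (F j).continuous).aestronglyMeasurable)
      (integrable_const _)
      (fun j => Filter.Eventually.of_forall fun x => by
        simp only [Function.comp_apply]
        rw [Real.norm_eq_abs, abs_of_pos (Real.exp_pos _)]
        exact Real.exp_le_exp.mpr (le_trans (le_abs_self _) (hFb j x)))
    filter_upwards [haeF] with x hx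
    exact (Real.continuous_exp.tendsto _).comp hx
  -- positivity of the limiting integral
  have hinte : Integrable (fun x => Real.exp (clog n (ψ x))) P := by
    apply (integrable_const (Real.exp n)).mono'
      ((Real.measurable_exp.comp ((clog_continuous n).measurable.comp hψm)).aestronglyMeasurable)
    refine Filter.Eventually.of_forall fun x => ?_
    simp only [Function.comp_apply]
    rw [Real.norm_eq_abs, abs_of_pos (Real.exp_pos _)]
    exact Real.exp_le_exp.mpr (le_trans (le_abs_self _) (clog_abs_le n _))
  have hpos : 0 < ∫ x, Real.exp (clog n (ψ x)) ∂P := integral_exp_pos hinte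
  -- pass to the limit
  have hconv3 : Tendsto (fun j => ∫ x, F j x ∂μ - Real.log (∫ x, Real.exp (F j x) ∂P)) atTop
      (nhds (∫ x, clog n (ψ x) ∂μ - Real.log (∫ x, Real.exp (clog n (ψ x)) ∂P))) := by
    apply hconv1.sub
    exact ((Real.continuousAt_log hpos.ne').tendsto.comp hconv2)
  exact le_of_tendsto hconv3 (Filter.Eventually.of_forall fun j => hub (F j))

lemma aux_int
    (hub : ∀ f : C(X, ℝ), ∫ x, f x ∂μ - Real.log (∫ x, Real.exp (f x) ∂P) ≤ H)
    (hac : μ ≪ P) :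
    Integrable (fun x => (μ.rnDeriv P x).toReal * Real.log (μ.rnDeriv P x).toReal) P ∧
    ∫ x, (μ.rnDeriv P x).toReal * Real.log (μ.rnDeriv P x).toReal ∂P ≤ H := by
  set ψ : X → ℝ := fun x => (μ.rnDeriv P x).toReal with hψ
  have hψm : Measurable ψ := (Measure.measurable_rnDeriv μ P).ennreal_toReal
  have hψnn : ∀ x, 0 ≤ ψ x := fun x => ENNReal.toReal_nonneg
  have hψi : Integrable ψ P := Measure.integrable_toReal_rnDeriv
  have hψ1 : ∫ x, ψ x ∂P = 1 := by
    rw [hψ, Measure.integral_toReal_rnDeriv hac]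
    simp
  set g : ℕ → X → ℝ := fun n x => ψ x * clog n (ψ x) with hg
  set G : X → ℝ := fun x => ψ x * Real.log (ψ x) with hG
  have hGm : Measurable G := hψm.mul (Real.measurable_log.comp hψm)
  have hgm : ∀ n, Measurable (g n) :=
    fun n => hψm.mul ((clog_continuous n).measurable.comp hψm)
  have hgi : ∀ n, Integrable (g n) P := by
    intro n
    apply (hψi.const_mul (n:ℝ)).mono' (hgm n).aestronglyMeasurable
    refine Filter.Eventually.of_forall fun x => ?_
    rw [Real.norm_eq_abs, hg, abs_mul, abs_of_nonneg (hψnn x)]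
    calc ψ x * |clog n (ψ x)| ≤ ψ x * n :=
          mul_le_mul_of_nonneg_left (clog_abs_le n _) (hψnn x)
      _ = (n:ℝ) * ψ x := mul_comm _ _
  -- key integral bound
  have hgle : ∀ n : ℕ, ∫ x, g n x ∂P ≤ H + Real.exp (-(n:ℝ)) := by
    intro n
    have ht := aux_test μ P H hub hac n
    -- ∫ clog n (ψ x) dμ = ∫ g n dP
    have h1 : ∫ x, g n x ∂P = ∫ x, clog n (ψ x) ∂μ := by
      rw [hg]
      have := integral_rnDeriv_smul hac (f := fun x => clog n (ψ x))
      simp only [smul_eq_mul] at this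
      exact this
    -- bound on exp integral
    have h2 : ∫ x, Real.exp (clog n (ψ x)) ∂P ≤ 1 + Real.exp (-(n:ℝ)) := by
      have hpt : ∀ x, Real.exp (clog n (ψ x)) ≤ ψ x + Real.exp (-(n:ℝ)) := by
        intro x
        rw [exp_clog]
        apply max_le
        · exact le_add_of_le_of_nonneg (min_le_left _ _) (Real.exp_pos _).le
        · exact le_add_of_nonneg_of_le (hψnn x) le_rfl
      have hinte : Integrable (fun x => Real.exp (clog n (ψ x))) P := by
        apply (integrable_const (Real.exp n)).mono'
          ((Real.measurable_exp.comp
            ((clog_continuous n).measurable.comp hψm)).aestronglyMeasurable)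
        refine Filter.Eventually.of_forall fun x => ?_
        simp only [Function.comp_apply]
        rw [Real.norm_eq_abs, abs_of_pos (Real.exp_pos _)]
        exact Real.exp_le_exp.mpr (le_trans (le_abs_self _) (clog_abs_le n _))
      calc ∫ x, Real.exp (clog n (ψ x)) ∂P ≤ ∫ x, (ψ x + Real.exp (-(n:ℝ))) ∂P :=
            integral_mono hinte (hψi.add (integrable_const _)) hpt
        _ = 1 + Real.exp (-(n:ℝ)) := by
            rw [integral_add hψi (integrable_const _), hψ1, integral_const]
            simp
    have hpos : 0 < ∫ x, Real.exp (clog n (ψ x)) ∂P := by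
      apply integral_exp_pos
      apply (integrable_const (Real.exp n)).mono'
        ((Real.measurable_exp.comp
          ((clog_continuous n).measurable.comp hψm)).aestronglyMeasurable)
      refine Filter.Eventually.of_forall fun x => ?_
      simp only [Function.comp_apply]
      rw [Real.norm_eq_abs, abs_of_pos (Real.exp_pos _)]
      exact Real.exp_le_exp.mpr (le_trans (le_abs_self _) (clog_abs_le n _))
    have h3 : Real.log (∫ x, Real.exp (clog n (ψ x)) ∂P) ≤ Real.exp (-(n:ℝ)) := by
      calc Real.log (∫ x, Real.exp (clog n (ψ x)) ∂P) ≤ Real.log (1 + Real.exp (-(n:ℝ))) :=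
            Real.log_le_log hpos h2
        _ ≤ (1 + Real.exp (-(n:ℝ))) - 1 :=
            Real.log_le_sub_one_of_pos (by positivity)
        _ = Real.exp (-(n:ℝ)) := by ring
    rw [h1]
    linarith
  -- pointwise convergence
  have hconv : ∀ x, Filter.Tendsto (fun n : ℕ => g n x) atTop (nhds (G x)) :=
    fun x => tendsto_mul_clog (hψnn x)
  -- lower bounds
  have hglo : ∀ n x, -1 ≤ g n x := fun n x => mul_clog_neg_one_le (hψnn x) n
  have hGlo : ∀ x, -1 ≤ G x := fun x => by
    have := aux_sub_one_le_mul_log (hψnn x)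
    have := hψnn x
    rw [hG]
    dsimp only
    linarith [aux_sub_one_le_mul_log (hψnn x)]
  -- Fatou: integrability of G
  have hGi : Integrable G P := by
    set G1 : X → ℝ := fun x => G x + 1 with hG1
    have hG1m : Measurable G1 := hGm.add measurable_const
    have hG1nn : ∀ x, 0 ≤ G1 x := fun x => by
      have := hGlo x; rw [hG1]; dsimp only; linarith
    have hfatou : ∫⁻ x, ENNReal.ofReal (G1 x) ∂P
        ≤ Filter.liminf (fun n => ∫⁻ x, ENNReal.ofReal (g n x + 1) ∂P) atTop := by
      have heq : ∀ x, ENNReal.ofReal (G1 x)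
          = Filter.liminf (fun n => ENNReal.ofReal (g n x + 1)) atTop := by
        intro x
        have : Filter.Tendsto (fun n : ℕ => ENNReal.ofReal (g n x + 1)) atTop
            (nhds (ENNReal.ofReal (G x + 1))) :=
          (ENNReal.continuous_ofReal.tendsto _).comp ((hconv x).add tendsto_const_nhds)
        exact (this.liminf_eq).symm
      calc ∫⁻ x, ENNReal.ofReal (G1 x) ∂P
          = ∫⁻ x, Filter.liminf (fun n => ENNReal.ofReal (g n x + 1)) atTop ∂P :=
            lintegral_congr fun x => heq x
        _ ≤ Filter.liminf (fun n => ∫⁻ x, ENNReal.ofReal (g n x + 1) ∂P) atTop :=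
            lintegral_liminf_le fun n =>
              ENNReal.measurable_ofReal.comp ((hgm n).add measurable_const)
    have hbound : ∀ n : ℕ, ∫⁻ x, ENNReal.ofReal (g n x + 1) ∂P
        ≤ ENNReal.ofReal (H + 2) := by
      intro n
      have hint1 : Integrable (fun x => g n x + 1) P := (hgi n).add (integrable_const 1)
      rw [← ofReal_integral_eq_lintegral_ofReal hint1
        (Filter.Eventually.of_forall fun x => by
          show (0:ℝ) ≤ g n x + 1
          linarith [hglo n x])]
      apply ENNReal.ofReal_le_ofReal
      have heq2 : ∫ x, (g n x + 1) ∂P = ∫ x, g n x ∂P + 1 := by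
        rw [integral_add (hgi n) (integrable_const 1), integral_const]
        simp [measure_univ]
      rw [heq2]
      have hexpn : Real.exp (-(n:ℝ)) ≤ 1 := by
        calc Real.exp (-(n:ℝ)) ≤ Real.exp 0 := Real.exp_le_exp.mpr (by simp)
          _ = 1 := Real.exp_zero
      have := hgle n
      linarith
    have hlim : Filter.liminf (fun n => ∫⁻ x, ENNReal.ofReal (g n x + 1) ∂P) atTop
        ≤ ENNReal.ofReal (H + 2) := by
      calc Filter.liminf (fun n => ∫⁻ x, ENNReal.ofReal (g n x + 1) ∂P) atTop
          ≤ Filter.liminf (fun _ : ℕ => ENNReal.ofReal (H + 2)) atTop :=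
            Filter.liminf_le_liminf (Filter.Eventually.of_forall hbound)
        _ = ENNReal.ofReal (H + 2) := Filter.liminf_const _
    have hG1fin : ∫⁻ x, ENNReal.ofReal (G1 x) ∂P < ⊤ :=
      lt_of_le_of_lt (le_trans hfatou hlim) ENNReal.ofReal_lt_top
    have hG1i : Integrable G1 P := by
      refine ⟨hG1m.aestronglyMeasurable, ?_⟩
      rw [hasFiniteIntegral_iff_ofReal (Filter.Eventually.of_forall hG1nn)]
      exact hG1fin
    have : G = fun x => G1 x - 1 := by funext x; rw [hG1]; ring
    rw [this]
    exact hG1i.sub (integrable_const 1)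
  -- dominated convergence for the integral bound
  have htend : Filter.Tendsto (fun n => ∫ x, g n x ∂P) atTop (nhds (∫ x, G x ∂P)) := by
    apply tendsto_integral_of_dominated_convergence (fun x => |G x| + 1)
      (fun n => (hgm n).aestronglyMeasurable) (hGi.abs.add (integrable_const 1))
      (fun n => Filter.Eventually.of_forall fun x => by
        rw [Real.norm_eq_abs]; exact abs_mul_clog_le (hψnn x) n)
    exact Filter.Eventually.of_forall hconv
  have hrhstend : Filter.Tendsto (fun n : ℕ => H + Real.exp (-(n:ℝ))) atTop (nhds H) := by
    have h1 : Filter.Tendsto (fun n : ℕ => Real.exp (-(n:ℝ))) atTop (nhds 0) := by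
      apply Real.tendsto_exp_atBot.comp
      exact Filter.tendsto_neg_atBot_iff.mpr tendsto_natCast_atTop_atTop
    have := (tendsto_const_nhds (x := H)).add h1
    simpa using this
  exact ⟨hGi, le_of_tendsto_of_tendsto' htend hrhstend hgle⟩

lemma aux_ub (hac : μ ≪ P)
    (hGi : Integrable (fun x => (μ.rnDeriv P x).toReal * Real.log (μ.rnDeriv P x).toReal) P)
    (f : C(X, ℝ)) :
    ∫ x, f x ∂μ - Real.log (∫ x, Real.exp (f x) ∂P)
      ≤ ∫ x, (μ.rnDeriv P x).toReal * Real.log (μ.rnDeriv P x).toReal ∂P := by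
  have hf : Integrable (fun x => f x) μ := cont_integrable f μ
  have hfe : Integrable (fun x => Real.exp (f x)) P :=
    cont_integrable ⟨fun x => Real.exp (f x), Real.continuous_exp.comp f.continuous⟩ P
  have h_int : Integrable (llr μ P) μ := by
    apply (integrable_rnDeriv_smul_iff hac).mp
    apply hGi.congr
    refine Filter.Eventually.of_forall fun x => ?_
    simp [llr, smul_eq_mul]
  set ν := P.tilted (fun x => f x) with hν
  have hPν : IsProbabilityMeasure ν := isProbabilityMeasure_tilted hfe
  have hacν : μ ≪ ν := hac.trans (absolutelyContinuous_tilted hfe)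
  have h_intν : Integrable (llr μ ν) μ := integrable_llr_tilted_right hac hf h_int hfe
  have hid : ∫ x, llr μ ν x ∂μ
      = ∫ x, llr μ P x ∂μ - ∫ x, f x ∂μ + Real.log (∫ x, Real.exp (f x) ∂P) :=
    integral_llr_tilted_right hac hf hfe h_int
  have hnonneg : 0 ≤ ∫ x, llr μ ν x ∂μ := by
    have heq : ∫ x, llr μ ν x ∂μ = ∫ x, (μ.rnDeriv ν x).toReal • llr μ ν x ∂ν :=
      (integral_rnDeriv_smul hacν).symm
    rw [heq]
    have hint1 : Integrable (fun x => (μ.rnDeriv ν x).toReal • llr μ ν x) ν :=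
      (integrable_rnDeriv_smul_iff hacν).mpr h_intν
    have hint2 : Integrable (fun x => (μ.rnDeriv ν x).toReal - 1) ν :=
      Measure.integrable_toReal_rnDeriv.sub (integrable_const 1)
    have hmono : ∀ x, (μ.rnDeriv ν x).toReal - 1 ≤ (μ.rnDeriv ν x).toReal • llr μ ν x := by
      intro x
      rw [smul_eq_mul, llr]
      exact aux_sub_one_le_mul_log ENNReal.toReal_nonneg
    have hzero : ∫ x, ((μ.rnDeriv ν x).toReal - 1) ∂ν = 0 := by
      rw [integral_sub Measure.integrable_toReal_rnDeriv (integrable_const 1),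
        Measure.integral_toReal_rnDeriv hacν, integral_const]
      simp
    calc (0:ℝ) = ∫ x, ((μ.rnDeriv ν x).toReal - 1) ∂ν := hzero.symm
      _ ≤ ∫ x, (μ.rnDeriv ν x).toReal • llr μ ν x ∂ν := integral_mono hint2 hint1 hmono
  have hfin : ∫ x, llr μ P x ∂μ
      = ∫ x, (μ.rnDeriv P x).toReal * Real.log (μ.rnDeriv P x).toReal ∂P := by
    rw [← integral_rnDeriv_smul hac (f := llr μ P)]
    congr 1
  linarith [hid ▸ hnonneg, hfin]
end AC
end Aux

/-- If `H(μ,π) = sup_{f ∈ C(X)} (∫ f dμ - log ∫ e^f dπ)` is finite, then `μ ≪ π`,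
`ψ = dμ/dπ` satisfies `ψ log ψ ∈ L¹(π)`, and `H(μ,π) = ∫ ψ log ψ dπ`. -/
theorem stmt14 {X : Type*} [MetricSpace X] [CompactSpace X]
    [MeasurableSpace X] [BorelSpace X]
    (μ π : Measure X) [IsProbabilityMeasure μ] [IsProbabilityMeasure π]
    (H : ℝ)
    (hH : IsLUB {r : ℝ | ∃ f : C(X, ℝ),
      r = ∫ x, f x ∂μ - Real.log (∫ x, Real.exp (f x) ∂π)} H) :
    μ ≪ π ∧
    Integrable (fun x => (μ.rnDeriv π x).toReal * Real.log (μ.rnDeriv π x).toReal) π ∧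
    H = ∫ x, (μ.rnDeriv π x).toReal * Real.log (μ.rnDeriv π x).toReal ∂π := by
  have hub : ∀ f : C(X, ℝ), ∫ x, f x ∂μ - Real.log (∫ x, Real.exp (f x) ∂π) ≤ H :=
    fun f => hH.1 ⟨f, rfl⟩
  have hac : μ ≪ π := aux_ac μ π H hub
  obtain ⟨hGi, hle⟩ := aux_int μ π H hub hac
  refine ⟨hac, hGi, le_antisymm ?_ hle⟩
  apply hH.2
  rintro r ⟨f, rfl⟩
  exact aux_ub μ π hac hGi f
end
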